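/- arXiv:1611.03039 — 6 statements merged into one kernel-verified Lean document; each statement's English description precedes it below -/
import Mathlib

section
/- Let V be a finite-dimensional real inner product space. Let S : ℝ → (V →L[ℝ] V) be differentiable, with S(t) self-adjoint and invertible for every t. Let ε, σ, σ̃ : ℝ → V with ε and σ differentiable, and suppose that for every t, σ'(t) = (S(t))⁻¹(ε'(t)) + σ̃(t). Then for every t, the function t ↦ (1/2)⟨σ(t), S(t)σ(t)⟩ is differentiable and its derivative equals ⟨σ(t), ε'(t)⟩ + ⟨σ(t), S(t)σ̃(t)⟩ + (1/2)⟨σ(t), S'(t)σ(t)⟩. -/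
open scoped RealInnerProductSpace

/-- Work density decomposition (Lemma 3.2 core computation): with strain energy density
`e_S(t) = (1/2)⟨σ(t), S(t)σ(t)⟩`, the identity `σ:ε̇ = ė_S + ė_D` holds with
`ė_D(t) = -[⟨σ, Sσ̃⟩ + (1/2)⟨σ, S'σ⟩]`. -/
theorem work_density_decomposition
    {V : Type*} [NormedAddCommGroup V] [InnerProductSpace ℝ V] [FiniteDimensional ℝ V]
    (S : ℝ → (V →L[ℝ] V)) (hS : Differentiable ℝ S)
    (hSsa : ∀ t, ∀ x y : V, ⟪S t x, y⟫ = ⟪x, S t y⟫)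
    (hSinv : ∀ t, IsUnit (S t))
    (ε σ σt : ℝ → V) (hε : Differentiable ℝ ε) (hσ : Differentiable ℝ σ)
    (hrel : ∀ t, deriv σ t = Ring.inverse (S t) (deriv ε t) + σt t) :
    ∀ t : ℝ, HasDerivAt (fun u => (1 / 2 : ℝ) * ⟪σ u, S u (σ u)⟫)
      (⟪σ t, deriv ε t⟫ + ⟪σ t, S t (σt t)⟫ + (1 / 2) * ⟪σ t, (deriv S t) (σ t)⟫) t := by
  intro t
  have hσt : HasDerivAt σ (deriv σ t) t := (hσ t).hasDerivAt
  have hSt : HasDerivAt S (deriv S t) t := (hS t).hasDerivAt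
  have hg : HasDerivAt (fun u => S u (σ u)) (deriv S t (σ t) + S t (deriv σ t)) t :=
    hSt.clm_apply hσt
  have h1 : HasDerivAt (fun u => ⟪σ u, S u (σ u)⟫)
      (⟪σ t, deriv S t (σ t) + S t (deriv σ t)⟫ + ⟪deriv σ t, S t (σ t)⟫) t :=
    hσt.inner ℝ hg
  have h2 := h1.const_mul ((1:ℝ)/2)
  convert h2 using 1
  case e'_4 => rfl
  case e'_5 => rfl
  have hsym : ⟪deriv σ t, S t (σ t)⟫ = ⟪σ t, S t (deriv σ t)⟫ := by
    rw [real_inner_comm, hSsa]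
  have hSinvapp : S t (Ring.inverse (S t) (deriv ε t)) = deriv ε t := by
    have := Ring.mul_inverse_cancel (S t) (hSinv t)
    calc S t (Ring.inverse (S t) (deriv ε t))
        = (S t * Ring.inverse (S t)) (deriv ε t) := rfl
      _ = deriv ε t := by rw [this]; rfl
  have hkey : ⟪σ t, S t (deriv σ t)⟫ = ⟪σ t, deriv ε t⟫ + ⟪σ t, S t (σt t)⟫ := by
    rw [hrel t, map_add, inner_add_right, hSinvapp]
  rw [inner_add_right] at *
  rw [hsym, hkey]
  ring
end

section
/- Let A, C₀, D be real symmetric n×n matrices with A positive semidefinite, C₀ positive definite, D positive semidefinite, A*C₀ = C₀*A, and A*D = D*A. For any t ∈ ℝ, the matrix exp(-t•A)*C₀ is invertible; set S = (exp(-t•A)*C₀)⁻¹. Then the matrix A*S + S*exp(t•A)*D*S is positive semidefinite, i.e. σᵀ(A*S + S*exp(t•A)*D*S)σ ≥ 0 for every vector σ. -/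
open NormedSpace Matrix

variable {m : Type*} [Fintype m] [DecidableEq m]

namespace Matrix.PosSemidef

noncomputable def sqrt {P : Matrix m m ℝ} (hP : P.PosSemidef) : Matrix m m ℝ :=
  hP.1.eigenvectorUnitary.1 * diagonal (RCLike.ofReal ∘ Real.sqrt ∘ hP.1.eigenvalues) *
    star (hP.1.eigenvectorUnitary.1)

lemma posSemidef_sqrt {P : Matrix m m ℝ} (hP : P.PosSemidef) : hP.sqrt.PosSemidef := by
  unfold sqrt
  exact (posSemidef_diagonal_iff.mpr (fun i => Real.sqrt_nonneg (hP.1.eigenvalues i))).mul_mul_conjTranspose_same hP.1.eigenvectorUnitary.1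

lemma sqrt_mul_self {P : Matrix m m ℝ} (hP : P.PosSemidef) : hP.sqrt * hP.sqrt = P := by
  unfold sqrt
  set U : Matrix m m ℝ := hP.1.eigenvectorUnitary.1
  have hU1 : star U * U = 1 := Matrix.mem_unitaryGroup_iff'.mp hP.1.eigenvectorUnitary.2
  have hE : diagonal ((RCLike.ofReal : ℝ → ℝ) ∘ Real.sqrt ∘ hP.1.eigenvalues) *
      diagonal ((RCLike.ofReal : ℝ → ℝ) ∘ Real.sqrt ∘ hP.1.eigenvalues) =
      diagonal ((RCLike.ofReal : ℝ → ℝ) ∘ hP.1.eigenvalues) := by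
    rw [diagonal_mul_diagonal]; congr 1; funext i
    simp [Real.mul_self_sqrt (hP.eigenvalues_nonneg i)]
  calc U * diagonal (RCLike.ofReal ∘ Real.sqrt ∘ hP.1.eigenvalues) * star U *
        (U * diagonal (RCLike.ofReal ∘ Real.sqrt ∘ hP.1.eigenvalues) * star U)
      = U * (diagonal (RCLike.ofReal ∘ Real.sqrt ∘ hP.1.eigenvalues) * (star U * U) *
        diagonal (RCLike.ofReal ∘ Real.sqrt ∘ hP.1.eigenvalues)) * star U := by
        simp only [Matrix.mul_assoc]
    _ = P := by
      rw [hU1, Matrix.mul_one, hE]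
      exact hP.1.spectral_theorem.symm

end Matrix.PosSemidef

/-- If `Q` commutes with a positive semidefinite matrix `P`, then `Q` commutes with its
square root. -/
private lemma commute_sqrt {P Q : Matrix m m ℝ} (hP : P.PosSemidef)
    (h : Q * P = P * Q) : Q * hP.sqrt = hP.sqrt * Q := by
  set U : Matrix m m ℝ := hP.1.eigenvectorUnitary.1 with hUdef
  have hU1 : star U * U = 1 := Matrix.mem_unitaryGroup_iff'.mp hP.1.eigenvectorUnitary.2
  have hU2 : U * star U = 1 := Matrix.mem_unitaryGroup_iff.mp hP.1.eigenvectorUnitary.2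
  have cancel1 : ∀ X : Matrix m m ℝ, star U * (U * X) = X := fun X => by
    rw [← Matrix.mul_assoc, hU1, Matrix.one_mul]
  have cancel2 : ∀ X : Matrix m m ℝ, U * (star U * X) = X := fun X => by
    rw [← Matrix.mul_assoc, hU2, Matrix.one_mul]
  set d : m → ℝ := RCLike.ofReal ∘ hP.1.eigenvalues with hddef
  set s : m → ℝ := RCLike.ofReal ∘ Real.sqrt ∘ hP.1.eigenvalues with hsdef
  have sqrt_eq : hP.sqrt = U * (diagonal s * star U) := by
    rw [Matrix.PosSemidef.sqrt, Matrix.mul_assoc]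
  have hspec : P = U * (diagonal d * star U) := by
    rw [← Matrix.mul_assoc]; exact hP.1.spectral_theorem
  set M : Matrix m m ℝ := star U * (Q * U) with hMdef
  have hQU : Q * U = U * M := by rw [hMdef, cancel2]
  have hMU : M * star U = star U * Q := by
    rw [hMdef, Matrix.mul_assoc, Matrix.mul_assoc, hU2, Matrix.mul_one]
  have hM : M * diagonal d = diagonal d * M := by
    have h2 : Q * (U * (diagonal d * star U)) = U * (diagonal d * star U) * Q := by
      rw [← hspec]; exact h
    calc M * diagonal d
        = star U * (Q * U) * diagonal d * (star U * U) := by rw [hU1, Matrix.mul_one]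
      _ = star U * ((Q * (U * (diagonal d * star U))) * U) := by
          simp only [Matrix.mul_assoc]
      _ = star U * ((U * (diagonal d * star U) * Q) * U) := by rw [h2]
      _ = diagonal d * (star U * (Q * U)) := by
          simp only [Matrix.mul_assoc, cancel1]
      _ = diagonal d * M := rfl
  have key : ∀ i j, M i j * d j = d i * M i j := fun i j => by
    have := congrFun (congrFun hM i) j
    simpa [Matrix.mul_diagonal, Matrix.diagonal_mul] using this
  have key2 : M * diagonal s = diagonal s * M := by
    ext i j
    rw [Matrix.mul_diagonal, Matrix.diagonal_mul]
    rcases eq_or_ne (hP.1.eigenvalues i) (hP.1.eigenvalues j) with he | he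
    · have : s i = s j := by simp [hsdef, he]
      rw [this, mul_comm]
    · have hdij : d i ≠ d j := by simpa [hddef] using he
      have h0 : M i j = 0 := by
        have hk := key i j
        have : M i j * (d j - d i) = 0 := by ring_nf; nlinarith [key i j]
        rcases mul_eq_zero.mp this with h' | h'
        · exact h'
        · exact absurd (sub_eq_zero.mp h').symm hdij
      simp [h0]
  calc Q * hP.sqrt = (Q * U) * (diagonal s * star U) := by
        rw [sqrt_eq, Matrix.mul_assoc]
    _ = U * ((M * diagonal s) * star U) := by
        rw [hQU]; simp only [Matrix.mul_assoc]
    _ = U * ((diagonal s * M) * star U) := by rw [key2]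
    _ = U * (diagonal s * (star U * Q)) := by
        simp only [Matrix.mul_assoc, hMU]
    _ = hP.sqrt * Q := by rw [sqrt_eq]; simp only [Matrix.mul_assoc]

private lemma commute_nonsing_inv {X Y : Matrix m m ℝ} (hY : IsUnit Y.det)
    (h : X * Y = Y * X) : X * Y⁻¹ = Y⁻¹ * X := by
  calc X * Y⁻¹ = Y⁻¹ * Y * (X * Y⁻¹) := by rw [Matrix.nonsing_inv_mul _ hY, Matrix.one_mul]
    _ = Y⁻¹ * (Y * X * Y⁻¹) := by simp only [Matrix.mul_assoc]
    _ = Y⁻¹ * (X * (Y * Y⁻¹)) := by rw [← h]; simp only [Matrix.mul_assoc]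
    _ = Y⁻¹ * X := by rw [Matrix.mul_nonsing_inv _ hY, Matrix.mul_one]

/-- The product of two commuting positive semidefinite matrices is positive semidefinite. -/
private lemma mul_posSemidef_of_commute {P Q : Matrix m m ℝ} (hP : P.PosSemidef)
    (hQ : Q.PosSemidef) (h : P * Q = Q * P) : (P * Q).PosSemidef := by
  have hc : Q * hP.sqrt = hP.sqrt * Q := commute_sqrt hP h.symm
  have hPQ : P * Q = hP.sqrtᴴ * Q * hP.sqrt := by
    rw [hP.posSemidef_sqrt.1]
    calc P * Q = (hP.sqrt * hP.sqrt) * Q := by rw [hP.sqrt_mul_self]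
      _ = hP.sqrt * (Q * hP.sqrt) := by rw [Matrix.mul_assoc, hc]
      _ = hP.sqrt * Q * hP.sqrt := by rw [Matrix.mul_assoc]
  rw [hPQ]
  exact hQ.conjTranspose_mul_mul_same hP.sqrt


/-- Remark 4.3: for commuting `A` (symmetric PSD), `C₀` (symmetric PD), `D` (symmetric PSD) with
`A*C₀ = C₀*A` and `A*D = D*A`, the matrix `exp(-t•A)*C₀` is invertible and, with
`S = (exp(-t•A)*C₀)⁻¹`, the matrix `A*S + S*exp(t•A)*D*S` is positive semidefinite. -/
theorem exp_kernel_dissipation_nonneg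
    {n : ℕ} (A C₀ D : Matrix (Fin n) (Fin n) ℝ)
    (hA : A.PosSemidef) (hC₀ : C₀.PosDef) (hD : D.PosSemidef)
    (hAC : A * C₀ = C₀ * A) (hAD : A * D = D * A) (t : ℝ) :
    IsUnit (NormedSpace.exp (-t • A) * C₀) ∧
      ∀ σ : Fin n → ℝ,
        0 ≤ σ ⬝ᵥ ((A * (NormedSpace.exp (-t • A) * C₀)⁻¹
            + (NormedSpace.exp (-t • A) * C₀)⁻¹ * NormedSpace.exp (t • A) * D
              * (NormedSpace.exp (-t • A) * C₀)⁻¹).mulVec σ) := by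
  -- exp of any real multiple of `A` is symmetric positive semidefinite
  have hherm : ∀ c : ℝ, ((c • A)).IsHermitian := fun c => by
    show (c • A)ᴴ = c • A
    rw [Matrix.conjTranspose_smul, star_trivial, hA.1.eq]
  have hexpherm : ∀ c : ℝ, (NormedSpace.exp (c • A)).IsHermitian := fun c => (hherm c).exp
  have hexp_psd : ∀ c : ℝ, (NormedSpace.exp (c • A)).PosSemidef := by
    intro c
    have hsum : (c/2) • A + (c/2) • A = c • A := by rw [← add_smul]; norm_num
    have hsplit : NormedSpace.exp (c • A) = NormedSpace.exp ((c/2) • A) * NormedSpace.exp ((c/2) • A) := by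
      rw [← Matrix.exp_add_of_commute _ _ (Commute.refl _), hsum]
    rw [hsplit]
    nth_rewrite 1 [← (hexpherm (c/2))]
    exact Matrix.posSemidef_conjTranspose_mul_self _
  -- commutations with exponentials
  have hAexp : ∀ c : ℝ, A * NormedSpace.exp (c • A) = NormedSpace.exp (c • A) * A :=
    fun c => (((Commute.refl A).smul_right c).exp_right).eq
  have hCexp : ∀ c : ℝ, C₀ * NormedSpace.exp (c • A) = NormedSpace.exp (c • A) * C₀ :=
    fun c => (((show Commute C₀ A from hAC.symm).smul_right c).exp_right).eq
  have hDexp : ∀ c : ℝ, D * NormedSpace.exp (c • A) = NormedSpace.exp (c • A) * D :=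
    fun c => (((show Commute D A from hAD.symm).smul_right c).exp_right).eq
  set E : Matrix (Fin n) (Fin n) ℝ := NormedSpace.exp (-t • A) with hEdef
  -- invertibility of E * C₀
  have hUnit : IsUnit (E * C₀) := by
    rw [Matrix.isUnit_iff_isUnit_det, Matrix.det_mul]
    exact ((Matrix.isUnit_iff_isUnit_det E).mp (Matrix.isUnit_exp _)).mul
      (isUnit_iff_ne_zero.mpr hC₀.det_pos.ne')
  have hUnitDet : IsUnit (E * C₀).det := (Matrix.isUnit_iff_isUnit_det _).mp hUnit
  refine ⟨hUnit, fun σ => ?_⟩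
  set S : Matrix (Fin n) (Fin n) ℝ := (E * C₀)⁻¹ with hSdef
  -- `E * C₀` and hence `S` is positive semidefinite
  have hECpsd : (E * C₀).PosSemidef :=
    mul_posSemidef_of_commute (hexp_psd (-t)) hC₀.posSemidef (hCexp (-t)).symm
  have hSpsd : S.PosSemidef := hECpsd.inv
  -- `A` commutes with `S`
  have hAEC : A * (E * C₀) = (E * C₀) * A := by
    rw [← Matrix.mul_assoc, hAexp (-t), Matrix.mul_assoc, hAC, Matrix.mul_assoc]
  have hAS : A * S = S * A := commute_nonsing_inv hUnitDet hAEC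
  -- the two summands are positive semidefinite
  have hM1 : (A * S).PosSemidef := mul_posSemidef_of_commute hA hSpsd hAS
  have hED : (NormedSpace.exp (t • A) * D).PosSemidef :=
    mul_posSemidef_of_commute (hexp_psd t) hD (hDexp t).symm
  have hM2 : (S * NormedSpace.exp (t • A) * D * S).PosSemidef := by
    have : S * NormedSpace.exp (t • A) * D * S = Sᴴ * (NormedSpace.exp (t • A) * D) * S := by
      rw [hSpsd.1]; simp only [Matrix.mul_assoc]
    rw [this]
    exact hED.conjTranspose_mul_mul_same S
  have hsum := (hM1.add hM2).dotProduct_mulVec_nonneg σ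
  simpa using hsum
end

section
/- Let λ, μ, γ, τ > 0 be real numbers, let ε, σ_λ, σ_μ : ℝ → Matrix (Fin 3) (Fin 3) ℝ be differentiable functions satisfying σ_λ'(t) = λ·ε'(t) - (1/γ)·σ_λ(t) and σ_μ'(t) = μ·ε'(t) - (1/τ)·σ_μ(t) for all t. Define σ(t) = trace(σ_λ(t))·I + 2·σ_μ(t) and e_S(t) = (1/μ)‖σ_μ(t)‖_F² + (1/(2λ))(trace σ_λ(t))². Then for every t, e_S is differentiable at t and ⟨σ(t), ε'(t)⟩_F - e_S'(t) = (2/(μτ))‖σ_μ(t)‖_F² + (1/(λγ))(trace σ_λ(t))². -/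
open Finset

/-- The Frobenius inner product of real square matrices: `⟨A,B⟩_F = ∑ᵢⱼ AᵢⱼBᵢⱼ = tr(AᵀB)`. -/
def frobInner {n : ℕ} (A B : Matrix (Fin n) (Fin n) ℝ) : ℝ :=
  ∑ i, ∑ j, A i j * B i j

/-- Work density decomposition for the isotropic stiffness tensor of exponential convolution
type: with `σ = tr(σ_λ)·I + 2σ_μ` and `e_S = (1/μ)‖σ_μ‖_F² + (1/(2λ))(tr σ_λ)²`, one has
`⟨σ, ε'⟩_F - e_S' = (2/(μτ))‖σ_μ‖_F² + (1/(λγ))(tr σ_λ)²`. -/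
theorem exp_convolution_work_density
    (l m γ τ : ℝ) (hl : 0 < l) (hm : 0 < m) (hγ : 0 < γ) (hτ : 0 < τ)
    (ε εd σl σm : ℝ → Matrix (Fin 3) (Fin 3) ℝ)
    (hε : ∀ t, HasDerivAt (fun u => Matrix.of.symm (ε u)) (Matrix.of.symm (εd t)) t)
    (hσl : ∀ t, HasDerivAt (fun u => Matrix.of.symm (σl u))
      (Matrix.of.symm (l • εd t - (1 / γ) • σl t)) t)
    (hσm : ∀ t, HasDerivAt (fun u => Matrix.of.symm (σm u))
      (Matrix.of.symm (m • εd t - (1 / τ) • σm t)) t) :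
    ∀ t : ℝ,
      HasDerivAt
        (fun u => (1 / m) * frobInner (σm u) (σm u) + (1 / (2 * l)) * ((σl u).trace) ^ 2)
        (frobInner ((σl t).trace • (1 : Matrix (Fin 3) (Fin 3) ℝ) + (2 : ℝ) • σm t) (εd t)
          - ((2 / (m * τ)) * frobInner (σm t) (σm t) + (1 / (l * γ)) * ((σl t).trace) ^ 2))
        t := by
  intro t
  -- entrywise derivatives
  have hm' : ∀ i j, HasDerivAt (fun u => σm u i j)
      (m * εd t i j - (1 / τ) * σm t i j) t := by
    intro i j
    have h1 := hasDerivAt_pi.mp (hσm t) i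
    have h2 := hasDerivAt_pi.mp h1 j
    simpa [Matrix.sub_apply, Matrix.smul_apply, smul_eq_mul] using h2
  have hl' : ∀ i j, HasDerivAt (fun u => σl u i j)
      (l * εd t i j - (1 / γ) * σl t i j) t := by
    intro i j
    have h1 := hasDerivAt_pi.mp (hσl t) i
    have h2 := hasDerivAt_pi.mp h1 j
    simpa [Matrix.sub_apply, Matrix.smul_apply, smul_eq_mul] using h2
  -- derivative of frobInner (σm u) (σm u)
  have hF : HasDerivAt (fun u => frobInner (σm u) (σm u))
      (∑ i, ∑ j, ((m * εd t i j - (1 / τ) * σm t i j) * σm t i j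
        + σm t i j * (m * εd t i j - (1 / τ) * σm t i j))) t := by
    unfold frobInner
    exact HasDerivAt.fun_sum fun i _ => HasDerivAt.fun_sum fun j _ => (hm' i j).mul (hm' i j)
  -- derivative of trace
  have hT : HasDerivAt (fun u => (σl u).trace)
      (∑ i, (l * εd t i i - (1 / γ) * σl t i i)) t := by
    simp only [Matrix.trace, Matrix.diag]
    exact HasDerivAt.fun_sum fun i _ => hl' i i
  have hT2 : HasDerivAt (fun u => ((σl u).trace) ^ 2)
      (2 * ((σl t).trace) ^ 1 * (∑ i, (l * εd t i i - (1 / γ) * σl t i i))) t := by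
    simpa using hT.fun_pow 2
  have h := (hF.const_mul (1 / m)).fun_add (hT2.const_mul (1 / (2 * l)))
  convert h using 1
  · rfl
  · rfl
  simp only [frobInner, Matrix.trace, Matrix.diag, Matrix.add_apply, Matrix.smul_apply,
    Matrix.one_apply, smul_eq_mul, Fin.sum_univ_three]
  norm_num [Fin.ext_iff]
  field_simp
  ring
end

section
/- For all real numbers α with 0 < α < 1 and a > 0, the improper integral over (0,∞) satisfies ∫₀^∞ (sin(απ)/π) · (aτ)^α / (τ·((aτ)^{2α} + 2(aτ)^α·cos(απ) + 1)) dτ = 1. -/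
open Real MeasureTheory Set

lemma aux_arctan_integral (θ : ℝ) (h0 : 0 < θ) (h1 : θ < π) :
    ∫ s in Set.Ioi (0:ℝ), 1 / (s ^ 2 + 2 * s * Real.cos θ + 1) = θ / Real.sin θ := by
  have hs : 0 < Real.sin θ := Real.sin_pos_of_pos_of_lt_pi h0 h1
  have hpy := Real.sin_sq_add_cos_sq θ
  set F : ℝ → ℝ := fun s => (Real.sin θ)⁻¹ * Real.arctan ((s + Real.cos θ) / Real.sin θ) with hF
  have hderiv : ∀ s : ℝ, HasDerivAt F (1 / (s ^ 2 + 2 * s * Real.cos θ + 1)) s := by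
    intro s
    have hpos : 0 < s ^ 2 + 2 * s * Real.cos θ + 1 := by nlinarith [sq_nonneg (s + Real.cos θ)]
    have h1' : HasDerivAt (fun s : ℝ => (s + Real.cos θ) / Real.sin θ) ((Real.sin θ)⁻¹) s := by
      simpa using ((hasDerivAt_id s).add_const (Real.cos θ)).div_const (Real.sin θ)
    have h2 := (Real.hasDerivAt_arctan ((s + Real.cos θ) / Real.sin θ)).comp s h1'
    have h3 := h2.const_mul ((Real.sin θ)⁻¹)
    refine h3.congr_deriv ?_
    symm
    have h4 : 1 + ((s + Real.cos θ) / Real.sin θ) ^ 2 > 0 := by positivity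
    field_simp
    rw [div_eq_one_iff_eq (by nlinarith [sq_nonneg (s + Real.cos θ)])]
    nlinarith [sq_nonneg (s + Real.cos θ)]
  have htend : Filter.Tendsto F Filter.atTop (nhds ((Real.sin θ)⁻¹ * (π / 2))) := by
    apply Filter.Tendsto.const_mul
    apply (tendsto_nhds_of_tendsto_nhdsWithin Real.tendsto_arctan_atTop).comp
    apply Filter.Tendsto.atTop_div_const hs
    exact Filter.tendsto_atTop_add_const_right _ _ Filter.tendsto_id
  have key := integral_Ioi_of_hasDerivAt_of_nonneg (g := F)
      (g' := fun s => 1 / (s ^ 2 + 2 * s * Real.cos θ + 1))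
      (a := 0) (l := (Real.sin θ)⁻¹ * (π / 2))
      ((hderiv 0).continuousAt.continuousWithinAt)
      (fun x _ => hderiv x)
      (fun x hx => by
        have hpos : 0 < x ^ 2 + 2 * x * Real.cos θ + 1 := by
          nlinarith [sq_nonneg (x + Real.cos θ)]
        positivity)
      htend
  rw [key]
  have harct : Real.arctan (Real.cos θ / Real.sin θ) = π / 2 - θ := by
    have : Real.cos θ / Real.sin θ = Real.tan (π / 2 - θ) := by
      rw [Real.tan_eq_sin_div_cos, Real.sin_pi_div_two_sub, Real.cos_pi_div_two_sub]
    rw [this, Real.arctan_tan (by linarith) (by linarith)]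
  simp only [hF, zero_add]
  rw [harct]
  field_simp
  ring

/-- The spectral measure of the Mittag-Leffler relaxation kernel in the fractional Zener model
is a probability measure:
`∫₀^∞ (sin(απ)/π)·(aτ)^α / (τ·((aτ)^{2α} + 2(aτ)^α cos(απ) + 1)) dτ = 1`. -/
theorem mittag_leffler_spectral_measure_total_mass
    (α a : ℝ) (hα0 : 0 < α) (hα1 : α < 1) (ha : 0 < a) :
    ∫ τ in Set.Ioi (0 : ℝ),
        (Real.sin (α * π) / π) * (a * τ) ^ α /
          (τ * ((a * τ) ^ (2 * α) + 2 * (a * τ) ^ α * Real.cos (α * π) + 1)) = 1 := by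
  have hθ0 : 0 < α * π := by positivity
  have hθ1 : α * π < π := by nlinarith [Real.pi_pos]
  have hsin : 0 < Real.sin (α * π) := Real.sin_pos_of_pos_of_lt_pi hθ0 hθ1
  set θ := α * π with hθ
  set φ : ℝ → ℝ := fun τ => (a * τ) ^ α with hφ
  set φ' : ℝ → ℝ := fun τ => α * a * (a * τ) ^ (α - 1) with hφ'
  set g : ℝ → ℝ := fun s =>
      (Real.sin θ / (α * π)) * (1 / (s ^ 2 + 2 * s * Real.cos θ + 1)) with hg
  -- image of Ioi 0 under φ is Ioi 0
  have himg : φ '' Set.Ioi (0:ℝ) = Set.Ioi (0:ℝ) := by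
    ext y
    constructor
    · rintro ⟨τ, hτ, rfl⟩
      have hτ0 : (0:ℝ) < τ := hτ
      exact Real.rpow_pos_of_pos (by positivity) α
    · intro hy
      have hy0 : (0:ℝ) < y := hy
      refine ⟨y ^ (1/α) / a, Set.mem_Ioi.mpr (by positivity), ?_⟩
      have : a * (y ^ (1/α) / a) = y ^ (1/α) := by field_simp
      rw [hφ]
      simp only [this]
      rw [← Real.rpow_mul hy0.le, one_div, inv_mul_cancel₀ (ne_of_gt hα0), Real.rpow_one]
  -- derivative of φ
  have hd : ∀ τ ∈ Set.Ioi (0:ℝ), HasDerivWithinAt φ (φ' τ) (Set.Ioi (0:ℝ)) τ := by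
    intro τ hτ
    have hτ0 : (0:ℝ) < τ := hτ
    have hat : 0 < a * τ := by positivity
    have h1 : HasDerivAt (fun x : ℝ => x ^ α) (α * (a * τ) ^ (α - 1)) (a * τ) := by
      simpa using (Real.hasDerivAt_rpow_const (x := a * τ) (p := α) (Or.inl hat.ne'))
    have h2 : HasDerivAt (fun τ : ℝ => a * τ) a τ := by
      simpa using (hasDerivAt_id τ).const_mul a
    have h3 := h1.comp τ h2
    have : HasDerivAt φ (φ' τ) τ := by
      refine h3.congr_deriv ?_
      symm
      simp [hφ']
      ring
    exact this.hasDerivWithinAt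
  -- injectivity of φ on Ioi 0
  have hinj : Set.InjOn φ (Set.Ioi (0:ℝ)) := by
    have : StrictMonoOn φ (Set.Ioi (0:ℝ)) := by
      intro x hx y hy hxy
      have hx0 : (0:ℝ) < x := hx
      exact Real.rpow_lt_rpow (by positivity) (by nlinarith) hα0
    exact this.injOn
  have hchange := integral_image_eq_integral_abs_deriv_smul measurableSet_Ioi hd hinj g
  rw [himg] at hchange
  -- pointwise identity
  have hpt : ∀ τ ∈ Set.Ioi (0:ℝ),
      (Real.sin θ / π) * (a * τ) ^ α /
          (τ * ((a * τ) ^ (2 * α) + 2 * (a * τ) ^ α * Real.cos θ + 1))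
        = |φ' τ| • g (φ τ) := by
    intro τ hτ
    have hτ0 : (0:ℝ) < τ := hτ
    have hat : 0 < a * τ := by positivity
    have hu : 0 < (a * τ) ^ α := Real.rpow_pos_of_pos hat α
    have h2α : (a * τ) ^ (2 * α) = ((a * τ) ^ α) ^ 2 := by
      rw [two_mul, Real.rpow_add hat]
      ring
    have habs : |φ' τ| = α * a * (a * τ) ^ (α - 1) := by
      rw [hφ', abs_of_pos]
      positivity
    have hm1 : (a * τ) ^ (α - 1) = (a * τ) ^ α / (a * τ) := by
      rw [Real.rpow_sub hat, Real.rpow_one]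
    set u := (a * τ) ^ α with hu'
    have hden : 0 < u ^ 2 + 2 * u * Real.cos θ + 1 := by
      nlinarith [sq_nonneg (u + Real.cos θ), Real.sin_sq_add_cos_sq θ, mul_pos hsin hsin]
    rw [smul_eq_mul, habs, hm1, h2α, hg]
    have hπ : (0:ℝ) < π := Real.pi_pos
    field_simp
    ring
  rw [setIntegral_congr_fun measurableSet_Ioi hpt, ← hchange, hg]
  rw [MeasureTheory.integral_const_mul, aux_arctan_integral θ hθ0 hθ1]
  rw [hθ]
  field_simp
  exact div_self (ne_of_gt hsin)
end

section
/- Let ρ > 0 and c > 0 be real numbers, n a natural number, (λᵢ)_{i ∈ Fin n} positive real numbers with ∑ᵢ λᵢ ≤ ρc², (σⁱ)_{i ∈ Fin n} real 3×3 matrices, and (qᵢ)_{i ∈ Fin n} real numbers with qᵢ ≥ ‖σⁱ‖_F²/λᵢ for each i. Then for all vectors v, m ∈ EuclideanSpace ℝ (Fin 3) with ‖m‖ ≤ 1: (ρ/2)‖v‖² + ∑ᵢ qᵢ/2 - (1/c)⟨(∑ᵢ σⁱ).mulVec v, m⟩ ≥ 0. -/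
open Finset
open scoped RealInnerProductSpace

lemma aux_mulVec_norm_le (A : Matrix (Fin 3) (Fin 3) ℝ) (v : EuclideanSpace ℝ (Fin 3)) :
    ‖(EuclideanSpace.equiv (Fin 3) ℝ).symm (A.mulVec v)‖
      ≤ Real.sqrt (∑ a, ∑ b, (A a b) ^ 2) * ‖v‖ := by
  have hv : ‖v‖ = Real.sqrt (∑ b, (v b) ^ 2) := by
    rw [EuclideanSpace.norm_eq]; simp [Real.norm_eq_abs, sq_abs]
  have hx : ‖(EuclideanSpace.equiv (Fin 3) ℝ).symm (A.mulVec v)‖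
      = Real.sqrt (∑ a, (A.mulVec v a) ^ 2) := by
    rw [EuclideanSpace.norm_eq]; simp [Real.norm_eq_abs, sq_abs]
  rw [hv, hx, ← Real.sqrt_mul (by positivity)]
  apply Real.sqrt_le_sqrt
  rw [Finset.sum_mul]
  apply Finset.sum_le_sum
  intro a _
  have h := Finset.sum_mul_sq_le_sq_mul_sq Finset.univ (fun b => A a b) (fun b => v b)
  simpa [Matrix.mulVec, dotProduct, pow_two] using h

/-- Pointwise nonnegativity of the lateral boundary integrand in the proof of the finite
superposition theorem: if `∑ᵢ λᵢ ≤ ρc²` and `qᵢ ≥ ‖σⁱ‖_F²/λᵢ` for each `i`, then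
`(ρ/2)‖v‖² + ∑ᵢ qᵢ/2 - (1/c)⟨(∑ᵢ σⁱ)v, m⟩ ≥ 0` whenever `‖m‖ ≤ 1`. -/
theorem superposition_lateral_integrand_nonneg
    (ρ c : ℝ) (hρ : 0 < ρ) (hc : 0 < c) (n : ℕ)
    (lam : Fin n → ℝ) (hlam : ∀ i, 0 < lam i) (hsum : ∑ i, lam i ≤ ρ * c ^ 2)
    (σ : Fin n → Matrix (Fin 3) (Fin 3) ℝ) (q : Fin n → ℝ)
    (hq : ∀ i, q i ≥ (∑ a, ∑ b, (σ i a b) ^ 2) / lam i)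
    (v m : EuclideanSpace ℝ (Fin 3)) (hm : ‖m‖ ≤ 1) :
    0 ≤ (ρ / 2) * ‖v‖ ^ 2 + ∑ i, q i / 2
      - (1 / c) * ⟪(EuclideanSpace.equiv (Fin 3) ℝ).symm ((∑ i, σ i).mulVec v), m⟫ := by
  set F : Fin n → ℝ := fun i => Real.sqrt (∑ a, ∑ b, (σ i a b) ^ 2) with hF
  -- bound the inner product
  have hsplit : ((EuclideanSpace.equiv (Fin 3) ℝ).symm ((∑ i, σ i).mulVec v) : EuclideanSpace ℝ (Fin 3))
      = ∑ i, (EuclideanSpace.equiv (Fin 3) ℝ).symm ((σ i).mulVec v) := by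
    have h1 : (∑ i, σ i).mulVec v = ∑ i, (σ i).mulVec v := by
      ext a
      simp [Matrix.mulVec, dotProduct, Matrix.sum_apply, Finset.sum_apply, Finset.sum_mul]
      rw [Finset.sum_comm]
    rw [h1, map_sum]
  have hnorm : ‖((EuclideanSpace.equiv (Fin 3) ℝ).symm ((∑ i, σ i).mulVec v) : EuclideanSpace ℝ (Fin 3))‖
      ≤ ∑ i, F i * ‖v‖ := by
    rw [hsplit]
    calc _ ≤ ∑ i, ‖((EuclideanSpace.equiv (Fin 3) ℝ).symm ((σ i).mulVec v) : EuclideanSpace ℝ (Fin 3))‖ :=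
          norm_sum_le _ _
      _ ≤ ∑ i, F i * ‖v‖ := Finset.sum_le_sum fun i _ => aux_mulVec_norm_le (σ i) v
  have hinner : ⟪((EuclideanSpace.equiv (Fin 3) ℝ).symm ((∑ i, σ i).mulVec v) : EuclideanSpace ℝ (Fin 3)), m⟫
      ≤ ∑ i, F i * ‖v‖ := by
    calc _ ≤ ‖((EuclideanSpace.equiv (Fin 3) ℝ).symm ((∑ i, σ i).mulVec v) : EuclideanSpace ℝ (Fin 3))‖ * ‖m‖ :=
          real_inner_le_norm _ _
      _ ≤ (∑ i, F i * ‖v‖) * 1 := by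
          apply mul_le_mul hnorm hm (norm_nonneg _)
          exact le_trans (norm_nonneg _) hnorm
      _ = ∑ i, F i * ‖v‖ := mul_one _
  -- key per-index inequality
  have hkey : ∀ i : Fin n,
      (1 / c) * (F i * ‖v‖) ≤ lam i / (2 * c ^ 2) * ‖v‖ ^ 2 + q i / 2 := by
    intro i
    have hli := hlam i
    have hFsq : F i ^ 2 = ∑ a, ∑ b, (σ i a b) ^ 2 :=
      Real.sq_sqrt (by positivity)
    have hFnn : 0 ≤ F i := Real.sqrt_nonneg _
    have hqi : q i ≥ F i ^ 2 / lam i := by rw [hFsq]; exact hq i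
    have hsq : 0 ≤ lam i / 2 * (‖v‖ / c - F i / lam i) ^ 2 := by positivity
    have hvnn : (0:ℝ) ≤ ‖v‖ := norm_nonneg _
    have hc' : c ≠ 0 := ne_of_gt hc
    have hli' : lam i ≠ 0 := ne_of_gt hli
    have hq2 : F i ^ 2 ≤ q i * lam i := by
      rw [ge_iff_le, div_le_iff₀ hli] at hqi
      linarith
    have H : F i * ‖v‖ * (2 * lam i * c) ≤ lam i * lam i * ‖v‖ ^ 2 + q i * lam i * c ^ 2 := by
      nlinarith [sq_nonneg (lam i * ‖v‖ - c * F i), sq_nonneg c, mul_pos hc hc]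
    calc 1 / c * (F i * ‖v‖) = (F i * ‖v‖ * (2 * lam i * c)) / (2 * lam i * c ^ 2) := by
          field_simp
      _ ≤ (lam i * lam i * ‖v‖ ^ 2 + q i * lam i * c ^ 2) / (2 * lam i * c ^ 2) := by
          gcongr
      _ = lam i / (2 * c ^ 2) * ‖v‖ ^ 2 + q i / 2 := by field_simp
  have hlamsum : ∑ i, lam i / (2 * c ^ 2) * ‖v‖ ^ 2 ≤ ρ / 2 * ‖v‖ ^ 2 := by
    rw [← Finset.sum_mul, ← Finset.sum_div]
    have : (∑ i, lam i) / (2 * c ^ 2) ≤ ρ / 2 := by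
      rw [div_le_div_iff₀ (by positivity) (by norm_num)]
      nlinarith
    nlinarith [sq_nonneg ‖v‖]
  have hfinal : (1 / c) * ⟪((EuclideanSpace.equiv (Fin 3) ℝ).symm ((∑ i, σ i).mulVec v) : EuclideanSpace ℝ (Fin 3)), m⟫
      ≤ ρ / 2 * ‖v‖ ^ 2 + ∑ i, q i / 2 := by
    calc (1 / c) * ⟪((EuclideanSpace.equiv (Fin 3) ℝ).symm ((∑ i, σ i).mulVec v) : EuclideanSpace ℝ (Fin 3)), m⟫
        ≤ (1 / c) * ∑ i, F i * ‖v‖ := by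
          apply mul_le_mul_of_nonneg_left hinner (by positivity)
      _ = ∑ i, (1 / c) * (F i * ‖v‖) := Finset.mul_sum _ _ _
      _ ≤ ∑ i, (lam i / (2 * c ^ 2) * ‖v‖ ^ 2 + q i / 2) := Finset.sum_le_sum fun i _ => hkey i
      _ = (∑ i, lam i / (2 * c ^ 2) * ‖v‖ ^ 2) + ∑ i, q i / 2 := Finset.sum_add_distrib
      _ ≤ ρ / 2 * ‖v‖ ^ 2 + ∑ i, q i / 2 := by linarith
  linarith
end

section
/- Let ρ > 0 and c > 0 be real numbers, β a measure on (0,∞), λ : (0,∞) → ℝ a β-integrable function with λ(τ) > 0 for β-almost every τ and ∫ λ dβ ≤ ρc², σ : (0,∞) → Matrix (Fin 3) (Fin 3) ℝ a Bochner β-integrable function, and q : (0,∞) → ℝ a β-integrable function with q(τ) ≥ ‖σ(τ)‖_F²/λ(τ) for β-almost every τ. Then for all vectors v, m ∈ EuclideanSpace ℝ (Fin 3) with ‖m‖ ≤ 1: (ρ/2)‖v‖² + (1/2)∫ q dβ - (1/c)⟨(∫ σ dβ).mulVec v, m⟩ ≥ 0. -/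
open Finset MeasureTheory
open scoped RealInnerProductSpace

private lemma euclid_sq_sum (v : EuclideanSpace ℝ (Fin 3)) : ∑ i, v i ^ 2 = ‖v‖ ^ 2 := by
  rw [← real_inner_self_eq_norm_sq]
  simp only [PiLp.inner_apply, RCLike.inner_apply, conj_trivial, sq]

private lemma aux_bound (v m : EuclideanSpace ℝ (Fin 3)) (hm : ‖m‖ ≤ 1)
    (A : Fin 3 → Fin 3 → ℝ) :
    ∑ i, (∑ j, A i j * v j) * m i ≤ Real.sqrt (∑ a, ∑ b, A a b ^ 2) * ‖v‖ := by
  have hsum : (∑ i, (∑ j, A i j * v j) * m i) ^ 2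
      ≤ (∑ i, (∑ j, A i j * v j) ^ 2) * ∑ i, m i ^ 2 :=
    Finset.sum_mul_sq_le_sq_mul_sq _ _ _
  have hrow : ∀ i, (∑ j, A i j * v j) ^ 2 ≤ (∑ j, A i j ^ 2) * ‖v‖ ^ 2 := by
    intro i
    calc (∑ j, A i j * v j) ^ 2 ≤ (∑ j, A i j ^ 2) * ∑ j, v j ^ 2 :=
          Finset.sum_mul_sq_le_sq_mul_sq _ _ _
      _ = (∑ j, A i j ^ 2) * ‖v‖ ^ 2 := by rw [euclid_sq_sum v]
  have hm2 : ∑ i, m i ^ 2 ≤ 1 := by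
    rw [euclid_sq_sum m]
    nlinarith [norm_nonneg m]
  have hmnn : (0:ℝ) ≤ ∑ i, m i ^ 2 := Finset.sum_nonneg fun _ _ => sq_nonneg _
  have h2 : (∑ i, (∑ j, A i j * v j) * m i) ^ 2 ≤ (∑ a, ∑ b, A a b ^ 2) * ‖v‖ ^ 2 := by
    calc (∑ i, (∑ j, A i j * v j) * m i) ^ 2
        ≤ (∑ i, (∑ j, A i j * v j) ^ 2) * ∑ i, m i ^ 2 := hsum
      _ ≤ (∑ i, (∑ j, A i j ^ 2) * ‖v‖ ^ 2) * 1 := by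
          apply mul_le_mul (Finset.sum_le_sum fun i _ => hrow i) hm2 hmnn
          exact Finset.sum_nonneg fun i _ => by positivity
      _ = (∑ a, ∑ b, A a b ^ 2) * ‖v‖ ^ 2 := by rw [← Finset.sum_mul]; ring
  have hF : Real.sqrt (∑ a, ∑ b, A a b ^ 2) * ‖v‖
      = Real.sqrt ((∑ a, ∑ b, A a b ^ 2) * ‖v‖ ^ 2) := by
    rw [Real.sqrt_mul (Finset.sum_nonneg fun _ _ => Finset.sum_nonneg fun _ _ => sq_nonneg _),
      Real.sqrt_sq (norm_nonneg v)]
  rw [hF]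
  calc ∑ i, (∑ j, A i j * v j) * m i ≤ |∑ i, (∑ j, A i j * v j) * m i| := le_abs_self _
    _ = Real.sqrt ((∑ i, (∑ j, A i j * v j) * m i) ^ 2) := (Real.sqrt_sq_eq_abs _).symm
    _ ≤ Real.sqrt ((∑ a, ∑ b, A a b ^ 2) * ‖v‖ ^ 2) := Real.sqrt_le_sqrt h2

/-- Pointwise nonnegativity of the lateral boundary integrand in the proof of the continuous
superposition theorem: for a measure `β` on `(0,∞)`, if `∫ λ dβ ≤ ρc²` with `λ > 0` β-a.e.,
`σ` is Bochner β-integrable and `q(τ) ≥ ‖σ(τ)‖_F²/λ(τ)` β-a.e., then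
`(ρ/2)‖v‖² + (1/2)∫ q dβ - (1/c)⟨(∫ σ dβ)v, m⟩ ≥ 0` whenever `‖m‖ ≤ 1`. -/
theorem continuous_superposition_lateral_integrand_nonneg
    (ρ c : ℝ) (hρ : 0 < ρ) (hc : 0 < c)
    (β : Measure ↥(Set.Ioi (0 : ℝ)))
    (lam : ↥(Set.Ioi (0 : ℝ)) → ℝ) (hlam_int : Integrable lam β)
    (hlam_pos : ∀ᵐ τ ∂β, 0 < lam τ)
    (hlam_sum : ∫ τ, lam τ ∂β ≤ ρ * c ^ 2)
    (σ : ↥(Set.Ioi (0 : ℝ)) → Matrix (Fin 3) (Fin 3) ℝ)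
    (hσ_int : Integrable (fun τ => Matrix.of.symm (σ τ)) β)
    (q : ↥(Set.Ioi (0 : ℝ)) → ℝ) (hq_int : Integrable q β)
    (hq : ∀ᵐ τ ∂β, q τ ≥ (∑ a, ∑ b, (σ τ a b) ^ 2) / lam τ)
    (v m : EuclideanSpace ℝ (Fin 3)) (hm : ‖m‖ ≤ 1) :
    0 ≤ (ρ / 2) * ‖v‖ ^ 2 + (1 / 2) * ∫ τ, q τ ∂β
      - (1 / c) * ⟪(EuclideanSpace.equiv (Fin 3) ℝ).symm
          ((Matrix.of (∫ τ, Matrix.of.symm (σ τ) ∂β)).mulVec v), m⟫ := by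
  set L : (Fin 3 → Fin 3 → ℝ) →ₗ[ℝ] ℝ :=
    { toFun := fun A => ∑ i, (∑ j, A i j * v j) * m i
      map_add' := fun A B => by
        simp only [Pi.add_apply, add_mul, Finset.sum_add_distrib]
      map_smul' := fun r A => by
        simp only [Pi.smul_apply, smul_eq_mul, RingHom.id_apply, Finset.mul_sum,
          Finset.sum_mul]
        exact Finset.sum_congr rfl fun i _ =>
          Finset.sum_congr rfl fun j _ => by ring } with hL
  set T := L.toContinuousLinearMap with hT
  have hTapp : ∀ A : Fin 3 → Fin 3 → ℝ, T A = ∑ i, (∑ j, A i j * v j) * m i := fun A => rfl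
  have hcomm : ∫ τ, T (Matrix.of.symm (σ τ)) ∂β = T (∫ τ, Matrix.of.symm (σ τ) ∂β) :=
    T.integral_comp_comm hσ_int
  have hinner : ⟪(EuclideanSpace.equiv (Fin 3) ℝ).symm
      ((Matrix.of (∫ τ, Matrix.of.symm (σ τ) ∂β)).mulVec v), m⟫
      = T (∫ τ, Matrix.of.symm (σ τ) ∂β) := by
    rw [hTapp]
    simp [PiLp.inner_apply, RCLike.inner_apply, Matrix.mulVec, dotProduct, mul_comm]
  have hae : ∀ᵐ τ ∂β, (1 / c) * T (Matrix.of.symm (σ τ))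
      ≤ q τ / 2 + lam τ * (‖v‖ ^ 2 / (2 * c ^ 2)) := by
    filter_upwards [hlam_pos, hq] with τ hpos hqτ
    have hb := aux_bound v m hm (Matrix.of.symm (σ τ))
    rw [hTapp]
    set S := ∑ a, ∑ b, (σ τ a b) ^ 2 with hS
    have hSn : (0:ℝ) ≤ S := Finset.sum_nonneg fun _ _ => Finset.sum_nonneg fun _ _ => sq_nonneg _
    have hSb : (∑ a, ∑ b, (Matrix.of.symm (σ τ)) a b ^ 2) = S := rfl
    rw [hSb] at hb
    have hsq : Real.sqrt S ^ 2 = S := Real.sq_sqrt hSn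
    have hq' : S / lam τ ≤ q τ := hqτ
    have key : (1 / c) * (Real.sqrt S * ‖v‖) ≤ S / lam τ / 2 + lam τ * (‖v‖ ^ 2 / (2 * c ^ 2)) := by
      set a := Real.sqrt S with ha
      have haS : a ^ 2 = S := hsq
      have e1 : S / lam τ / 2 + lam τ * (‖v‖ ^ 2 / (2 * c ^ 2)) - 1 / c * (a * ‖v‖)
          = (c * a - lam τ * ‖v‖) ^ 2 / (2 * lam τ * c ^ 2) := by
        rw [← haS]
        field_simp
        ring
      have e2 : (0:ℝ) ≤ (c * a - lam τ * ‖v‖) ^ 2 / (2 * lam τ * c ^ 2) :=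
        div_nonneg (sq_nonneg _) (by positivity)
      linarith
    calc (1 / c) * ∑ i, (∑ j, (Matrix.of.symm (σ τ)) i j * v j) * m i
        ≤ (1 / c) * (Real.sqrt S * ‖v‖) := by
          apply mul_le_mul_of_nonneg_left hb (by positivity)
      _ ≤ S / lam τ / 2 + lam τ * (‖v‖ ^ 2 / (2 * c ^ 2)) := key
      _ ≤ q τ / 2 + lam τ * (‖v‖ ^ 2 / (2 * c ^ 2)) := by
          linarith
  have hint1 : Integrable (fun τ => (1 / c) * T (Matrix.of.symm (σ τ))) β :=
    (T.integrable_comp hσ_int).const_mul _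
  have hint2 : Integrable (fun τ => q τ / 2 + lam τ * (‖v‖ ^ 2 / (2 * c ^ 2))) β :=
    (hq_int.div_const 2).add (hlam_int.mul_const _)
  have hle := integral_mono_ae hint1 hint2 hae
  rw [integral_const_mul, hcomm] at hle
  rw [integral_add (hq_int.div_const 2) (hlam_int.mul_const _), integral_div,
    integral_mul_const] at hle
  have hlam_scaled : (∫ τ, lam τ ∂β) * (‖v‖ ^ 2 / (2 * c ^ 2))
      ≤ ρ * c ^ 2 * (‖v‖ ^ 2 / (2 * c ^ 2)) :=
    mul_le_mul_of_nonneg_right hlam_sum (by positivity)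
  have hsimp : ρ * c ^ 2 * (‖v‖ ^ 2 / (2 * c ^ 2)) = (ρ / 2) * ‖v‖ ^ 2 := by
    field_simp
  rw [hinner]
  linarith [hle, hlam_scaled.trans_eq hsimp]
end
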